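/- Fix α, β ∈ ℝ with α ≠ 0. The cubic potential U(x,y,z) = ((1 − 2β² − 2α²)/(3α)) x³ + y x² + (β/α) x² z satisfies the SLO condition along the line (x, αx, βx): i.e., ∇U(x, αx, βx) is parallel to (1, α, β) for all x ∈ ℝ. -/

import Mathlib

theorem inverse_cubic_slo (α β : ℝ) (hα : α ≠ 0) :
    let U : ℝ → ℝ → ℝ → ℝ := fun x y z =>
      ((1 - 2 * β ^ 2 - 2 * α ^ 2) / (3 * α)) * x ^ 3 + y * x ^ 2 + (β / α) * x ^ 2 * z
    ∃ lam : ℝ → ℝ, ∀ x : ℝ,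
      deriv (fun t => U t (α * x) (β * x)) x = lam x ∧
      deriv (fun t => U x t (β * x)) (α * x) = lam x * α ∧
      deriv (fun t => U x (α * x) t) (β * x) = lam x * β := by
  intro U
  refine ⟨fun x => x ^ 2 / α, fun x => ⟨?_, ?_, ?_⟩⟩
  · have h : HasDerivAt (fun t => U t (α * x) (β * x))
        (((1 - 2 * β ^ 2 - 2 * α ^ 2) / (3 * α)) * (3 * x ^ 2)
          + (α * x) * (2 * x) + (β / α) * (2 * x) * (β * x)) x := by
      have h1 := ((hasDerivAt_pow 3 x).const_mul ((1 - 2 * β ^ 2 - 2 * α ^ 2) / (3 * α)))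
      have h2 := ((hasDerivAt_pow 2 x).const_mul (α * x))
      have h3 := (((hasDerivAt_pow 2 x).const_mul (β / α)).mul_const (β * x))
      have := (h1.add h2).add h3
      convert this using 1
      · rfl
      · rfl
      · funext t; simp only [U, Pi.add_apply]
      · norm_num
    rw [h.deriv]; field_simp; ring
  · have h : HasDerivAt (fun t => U x t (β * x)) (x ^ 2) (α * x) := by
      have := ((hasDerivAt_id (α * x)).mul_const (x ^ 2)).add_const
        (((1 - 2 * β ^ 2 - 2 * α ^ 2) / (3 * α)) * x ^ 3 + (β / α) * x ^ 2 * (β * x))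
      convert this using 1
      · rfl
      · rfl
      · funext t; simp only [U, id]; ring
      · ring
    rw [h.deriv]; field_simp
  · have h : HasDerivAt (fun t => U x (α * x) t) ((β / α) * x ^ 2) (β * x) := by
      have := (((hasDerivAt_id (β * x)).const_mul ((β / α) * x ^ 2)).add_const
        (((1 - 2 * β ^ 2 - 2 * α ^ 2) / (3 * α)) * x ^ 3 + (α * x) * x ^ 2))
      convert this using 1
      · rfl
      · rfl
      · funext t; simp only [U, id]; ring
      · ring
    rw [h.deriv]; field_simp
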